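/- Let X = [0,∞) with the bounded metric d(x,y) = min(|x−y|, 1), and let F be the set-valued map F(x) = {2x, 3x}. Then the shift σ is not sensitive on lim←F. -/

import Mathlib

open Set Metric

section Defs

variable {X : Type*} [MetricSpace X]

/-- A set-valued map: `F` assigns to each point a nonempty closed subset and
is upper semi-continuous. -/
def IsSetValuedMap (F : X → Set X) : Prop :=
  (∀ x, (F x).Nonempty) ∧ (∀ x, IsClosed (F x)) ∧
    ∀ x, ∀ V : Set X, IsOpen V → F x ⊆ V →
      ∃ U : Set X, IsOpen U ∧ x ∈ U ∧ ∀ t ∈ U, F t ⊆ V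

/-- Lower semi-continuity of a set-valued map. -/
def LowerSemiCont (F : X → Set X) : Prop :=
  ∀ x, ∀ y ∈ F x, ∀ V : Set X, IsOpen V → y ∈ V →
    ∃ U : Set X, IsOpen U ∧ x ∈ U ∧ ∀ t ∈ U, (F t ∩ V).Nonempty

/-- An orbit of the set-valued map `F`: `o (i+1) ∈ F (o i)` for all `i`. -/
def IsOrbit (F : X → Set X) (o : ℕ → X) : Prop := ∀ i, o (i + 1) ∈ F (o i)

/-- `P(F)`: the set of points having at least one periodic orbit. -/
def periodicPts (F : X → Set X) : Set X :=
  {x | ∃ o : ℕ → X, o 0 = x ∧ IsOrbit F o ∧ ∃ m, 1 ≤ m ∧ ∀ i, o (i + m) = o i}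

/-- The inverse set-valued map `F⁻¹(x) = {y : x ∈ F y}`. -/
def Finv (F : X → Set X) : X → Set X := fun x => {y | x ∈ F y}

/-- The iterates `F^n`, with `F^0 x = {x}` and `F^{n+1} x = ⋃_{y ∈ F^n x} F y`. -/
def svIter (F : X → Set X) : ℕ → X → Set X
  | 0, x => {x}
  | n + 1, x => ⋃ y ∈ svIter F n x, F y

/-- The inverse limit `lim← F = {(x_0,x_1,…) : x_i ∈ F (x_{i+1})}`. -/
def invLimit (F : X → Set X) : Set (ℕ → X) := {x | ∀ i, x i ∈ F (x (i + 1))}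

/-- The shift map `σ(x_0, x_1, …) = (x_1, x_2, …)`. -/
def shift (x : ℕ → X) : ℕ → X := fun i => x (i + 1)

/-- The metric `ρ(x,y) = Σ_i d(x_i,y_i)/2^i` on sequences. -/
noncomputable def rho (x y : ℕ → X) : ℝ := ∑' i, dist (x i) (y i) / 2 ^ i

/-- Topological transitivity for a set-valued map. -/
def SVTransitive (F : X → Set X) : Prop :=
  ∀ U V : Set X, IsOpen U → U.Nonempty → IsOpen V → V.Nonempty →
    ∃ n, 1 ≤ n ∧ ∃ o : ℕ → X, IsOrbit F o ∧ o 0 ∈ U ∧ o n ∈ V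

/-- Strong sensitivity with a given constant `δ`. -/
def StronglySensitiveWith (F : X → Set X) (δ : ℝ) : Prop :=
  0 < δ ∧ ∀ x : X, ∀ ε > 0, ∃ y : X, dist x y < ε ∧
    ∃ o : ℕ → X, o 0 = y ∧ IsOrbit F o ∧ ∃ n, 1 ≤ n ∧ δ < infDist (o n) (svIter F n x)

/-- Strong sensitivity: some `δ > 0` is a strongly sensitive constant. -/
def StronglySensitive (F : X → Set X) : Prop := ∃ δ, StronglySensitiveWith F δ

/-- Sensitivity for a set-valued map. -/
def SVSensitive (F : X → Set X) : Prop :=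
  ∃ δ > 0, ∀ ε > 0, ∀ o : ℕ → X, IsOrbit F o →
    ∃ o' : ℕ → X, IsOrbit F o' ∧ dist (o 0) (o' 0) < ε ∧ ∃ n, 1 ≤ n ∧ δ < dist (o n) (o' n)

/-- Topological transitivity of the shift `σ` on `lim← F` (relatively open sets). -/
def ShiftTransitive (F : X → Set X) : Prop :=
  ∀ U V : Set (ℕ → X), IsOpen U → IsOpen V →
    (U ∩ invLimit F).Nonempty → (V ∩ invLimit F).Nonempty →
    ∃ n, 1 ≤ n ∧ ∃ x ∈ U ∩ invLimit F, shift^[n] x ∈ V ∩ invLimit F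

/-- Sensitivity of the shift `σ` on `lim← F` with respect to the metric `ρ`. -/
def ShiftSensitive (F : X → Set X) : Prop :=
  ∃ δ > 0, ∀ x ∈ invLimit F, ∀ ε > 0, ∃ y ∈ invLimit F,
    rho x y < ε ∧ ∃ n, 1 ≤ n ∧ δ < rho (shift^[n] x) (shift^[n] y)

/-- The set of σ-periodic points of `lim← F`. -/
def shiftPerPts (F : X → Set X) : Set (ℕ → X) :=
  {z | z ∈ invLimit F ∧ ∃ n, 1 ≤ n ∧ shift^[n] z = z}

end Defs

/-- The half-line `[0, ∞)`. -/
def HalfLine : Type := {x : ℝ // 0 ≤ x}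

/-- The bounded metric `d(x,y) = min (|x - y|) 1` on the half-line. -/
noncomputable instance : MetricSpace HalfLine where
  dist x y := min |x.1 - y.1| 1
  dist_self x := by simp
  dist_comm x y := by simp [abs_sub_comm]
  dist_triangle x y z := by
    show min |x.1 - z.1| 1 ≤ min |x.1 - y.1| 1 + min |y.1 - z.1| 1
    have habs : |x.1 - z.1| ≤ |x.1 - y.1| + |y.1 - z.1| := abs_sub_le _ _ _
    have n1 : (0:ℝ) ≤ min |x.1 - y.1| 1 := le_min (abs_nonneg _) zero_le_one
    have n2 : (0:ℝ) ≤ min |y.1 - z.1| 1 := le_min (abs_nonneg _) zero_le_one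
    have l1 : min |x.1 - z.1| 1 ≤ 1 := min_le_right _ _
    have l2 : min |x.1 - z.1| 1 ≤ |x.1 - z.1| := min_le_left _ _
    rcases le_total 1 |x.1 - y.1| with h | h
    · rw [min_eq_right h]; linarith
    · rcases le_total 1 |y.1 - z.1| with h' | h'
      · rw [min_eq_right h']; linarith
      · rw [min_eq_left h, min_eq_left h']; linarith
  eq_of_dist_eq_zero := by
    intro x y h
    have h' : min |x.1 - y.1| 1 = 0 := h
    rcases min_eq_iff.mp h' with ⟨h1, _⟩ | ⟨h1, _⟩
    · exact Subtype.ext (sub_eq_zero.mp (abs_eq_zero.mp h1))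
    · norm_num at h1

/-- The set-valued map `F x = {2x, 3x}` on the half-line. -/
def F10 : HalfLine → Set HalfLine := fun x => {y | y.1 = 2 * x.1 ∨ y.1 = 3 * x.1}

/-- the shift `σ` is not sensitive on `lim← F10`. -/
lemma dist_halfline (a b : HalfLine) : dist a b = min |a.1 - b.1| 1 := rfl

lemma shift_iter (n : ℕ) (x : ℕ → HalfLine) (i : ℕ) :
    (shift^[n] x) i = x (i + n) := by
  induction n generalizing x with
  | zero => rfl
  | succ n ih =>
    rw [Function.iterate_succ_apply, ih]
    show x (i + n + 1) = x (i + (n + 1))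
    ring_nf

theorem stmt11 : ¬ ShiftSensitive F10 := by
  rintro ⟨δ, hδ, h⟩
  set z : ℕ → HalfLine := fun _ => ⟨0, le_rfl⟩ with hz
  have hzinv : z ∈ invLimit F10 := fun i => Or.inl (by simp [hz])
  set ε := min δ 1 / 2 with hε
  have hεpos : 0 < ε := by
    have : 0 < min δ 1 := lt_min hδ one_pos
    positivity
  have hε1 : ε ≤ 1 / 2 := by
    have : min δ 1 ≤ 1 := min_le_right _ _
    rw [hε]; linarith
  obtain ⟨y, hyinv, hry, n, hn, hfar⟩ := h z hzinv ε hεpos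
  -- monotonicity: coordinates of y are nonincreasing
  have hmono : ∀ i, (y (i + 1)).1 ≤ (y i).1 := by
    intro i
    rcases hyinv i with h1 | h1 <;>
      · have := (y (i + 1)).2; rw [h1]; linarith
  have hle0 : ∀ i, (y i).1 ≤ (y 0).1 := by
    intro i
    induction i with
    | zero => exact le_rfl
    | succ k ih => exact (hmono k).trans ih
  -- distances are bounded by 1
  have hdle1 : ∀ (a b : HalfLine), dist a b ≤ 1 := fun a b => min_le_right _ _
  have hdnn : ∀ (a b : HalfLine), 0 ≤ dist a b := fun a b => dist_nonneg
  have hsummG : Summable (fun i : ℕ => (1 : ℝ) / 2 ^ i) := by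
    simpa [one_div, inv_pow] using summable_geometric_two
  have hsumm : ∀ (a b : ℕ → HalfLine),
      Summable (fun i => dist (a i) (b i) / 2 ^ i) := by
    intro a b
    refine Summable.of_nonneg_of_le (fun i => by positivity) (fun i => ?_) hsummG
    exact div_le_div_of_nonneg_right (hdle1 _ _) (by positivity) |>.trans_eq rfl
  -- y 0 is small
  have hy0 : (y 0).1 < ε := by
    have h0 : dist (z 0) (y 0) / 2 ^ 0 ≤ rho z y :=
      Summable.le_tsum (hsumm z y) 0 (fun i _ => by positivity)
    have h0' : dist (z 0) (y 0) < ε := by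
      simpa using h0.trans_lt hry
    rw [dist_halfline] at h0'
    have habs : |(z 0).1 - (y 0).1| = (y 0).1 := by
      rw [hz]
      simpa using abs_of_nonpos (a := (0:ℝ) - (y 0).1) (by simpa using (y 0).2)
    rw [habs] at h0'
    rcases min_lt_iff.mp h0' with h' | h'
    · exact h'
    · linarith
  -- all coordinates are small
  have hyi : ∀ i, (y i).1 < ε := fun i => (hle0 i).trans_lt hy0
  -- bound the rho at time n
  have hbound : rho (shift^[n] z) (shift^[n] y) ≤ 2 * ε := by
    have hterm : ∀ i, dist ((shift^[n] z) i) ((shift^[n] y) i) / 2 ^ i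
        ≤ ε * (1 / 2) ^ i := by
      intro i
      rw [shift_iter, shift_iter]
      have hd : dist (z (i + n)) (y (i + n)) ≤ ε := by
        rw [dist_halfline]
        refine (min_le_left _ _).trans ?_
        have habs : |(z (i + n)).1 - (y (i + n)).1| = (y (i + n)).1 := by
          rw [hz]
          simpa using abs_of_nonpos (a := (0:ℝ) - (y (i + n)).1) (by simpa using (y (i + n)).2)
        rw [habs]
        exact (hyi (i + n)).le
      have : ε * (1 / 2 : ℝ) ^ i = ε / 2 ^ i := by
        rw [div_pow, one_pow, mul_one_div]
      rw [this]
      exact div_le_div_of_nonneg_right hd (by positivity)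
    have hsG : Summable (fun i : ℕ => ε * (1 / 2 : ℝ) ^ i) :=
      summable_geometric_two.mul_left ε
    have := Summable.tsum_le_tsum hterm (hsumm _ _) hsG
    refine this.trans ?_
    rw [tsum_mul_left, tsum_geometric_two]
    ring_nf
    linarith
  have h2ε : 2 * ε ≤ δ := by
    have : min δ 1 ≤ δ := min_le_left _ _
    rw [hε]; linarith
  linarith [hfar.trans_le hbound]
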